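/- For Cauchy distributions with densities p_θ(x) = 1/(πσ(1 + ((x−θ)/σ)²)), the KL divergence satisfies KL(P_θ || P_{θ'}) = log(1 + (θ − θ')²/(4σ²)), and in particular KL(P_θ || P_{θ'}) ≤ (θ − θ')²/(4σ²). -/

import Mathlib

open MeasureTheory ProbabilityTheory
open scoped ENNReal NNReal

open Classical in
/-- Kullback–Leibler divergence: `∫ log (dP/dQ) dP` if `P ≪ Q`, else `+∞`. -/
noncomputable def klDiv {X : Type*} [MeasurableSpace X] (P Q : Measure X) : ℝ≥0∞ :=
  if P ≪ Q then ENNReal.ofReal (∫ x, Real.log (P.rnDeriv Q x).toReal ∂P) else ⊤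

/-- The Cauchy distribution with location `θ` and scale `σ`, defined by its density
`x ↦ 1 / (πσ(1 + ((x−θ)/σ)²))` with respect to Lebesgue measure. -/
noncomputable def cauchyMeasure (θ σ : ℝ) : Measure ℝ :=
  volume.withDensity fun x =>
    ENNReal.ofReal (1 / (Real.pi * σ * (1 + ((x - θ) / σ) ^ 2)))

namespace KLCauchyAux

open Filter Real
open scoped Topology

/-! ### The inner rational integrand and its bounds -/

noncomputable def H (t x : ℝ) : ℝ := 2*(t-x)/((1+(x-t)^2)*(Real.pi*(1+x^2)))

lemma continuous_H : Continuous (fun p : ℝ × ℝ => H p.1 p.2) := by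
  apply Continuous.div (by continuity) (by continuity)
  intro p
  have h1 : (0:ℝ) < 1+(p.2-p.1)^2 := by positivity
  have h2 : (0:ℝ) < Real.pi*(1+p.2^2) := by positivity
  positivity

lemma abs_H_le (t x : ℝ) : |H t x| ≤ (Real.pi*(1+x^2))⁻¹ := by
  have h1 : (0:ℝ) < 1+(x-t)^2 := by positivity
  have h2 : (0:ℝ) < Real.pi*(1+x^2) := by positivity
  have : H t x = (2*(t-x)/(1+(x-t)^2)) * (Real.pi*(1+x^2))⁻¹ := by
    unfold H; field_simp
  rw [this, abs_mul, abs_of_pos (inv_pos.2 h2)]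
  have hb : |2*(t-x)/(1+(x-t)^2)| ≤ 1 := by
    rw [abs_div, abs_of_pos h1, div_le_one h1]
    rw [abs_mul, abs_two, abs_sub_comm t x]
    nlinarith [sq_abs (x-t), sq_nonneg (|x-t|-1), abs_nonneg (x-t)]
  nlinarith [inv_pos.2 h2]

lemma integrable_inv_pi_one_add_sq : Integrable (fun x : ℝ => (Real.pi*(1+x^2))⁻¹) := by
  have := integrable_inv_one_add_sq.const_mul (Real.pi⁻¹)
  refine this.congr (Eventually.of_forall fun x => ?_)
  simp [mul_inv, mul_comm]

lemma integrable_H (t : ℝ) : Integrable (fun x => H t x) := by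
  refine integrable_inv_pi_one_add_sq.mono' ?_ (Eventually.of_forall fun x => ?_)
  · exact (continuous_H.comp (by continuity : Continuous fun x : ℝ => ((t:ℝ), x))).aestronglyMeasurable
  · rw [Real.norm_eq_abs]; exact abs_H_le t x

/-! ### The explicit antiderivative in `x` (partial fractions) -/

noncomputable def G (t x : ℝ) : ℝ :=
  (Real.log (1+x^2) - Real.log (1+(x-t)^2)) / (Real.pi*(t^2+4))
  + (2*(t^2+2)/(Real.pi*t*(t^2+4))) * Real.arctan x
  - (4/(Real.pi*t*(t^2+4))) * Real.arctan (x-t)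

lemma hasDerivAt_G {t : ℝ} (ht : t ≠ 0) (x : ℝ) : HasDerivAt (G t) (H t x) x := by
  have h1 : (0:ℝ) < 1+x^2 := by positivity
  have h2 : (0:ℝ) < 1+(x-t)^2 := by positivity
  have hq : HasDerivAt (fun x : ℝ => 1+x^2) (2*x) x := by
    simpa using (hasDerivAt_pow 2 x).const_add 1
  have hq2 : HasDerivAt (fun x : ℝ => 1+(x-t)^2) (2*(x-t)) x := by
    have := (((hasDerivAt_id x).sub_const t).pow 2).const_add 1
    simpa using this
  have hl1 : HasDerivAt (fun x : ℝ => Real.log (1+x^2)) (2*x/(1+x^2)) x := hq.log h1.ne'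
  have hl2 : HasDerivAt (fun x : ℝ => Real.log (1+(x-t)^2)) (2*(x-t)/(1+(x-t)^2)) x :=
    hq2.log h2.ne'
  have ha1 : HasDerivAt Real.arctan (1/(1+x^2)) x := Real.hasDerivAt_arctan x
  have ha2 : HasDerivAt (fun x : ℝ => Real.arctan (x-t)) (1/(1+(x-t)^2)) x := by
    have := (Real.hasDerivAt_arctan (x-t)).comp x ((hasDerivAt_id x).sub_const t)
    simpa [Function.comp_def] using this
  have hG : HasDerivAt (G t)
      ((2*x/(1+x^2) - 2*(x-t)/(1+(x-t)^2)) / (Real.pi*(t^2+4))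
        + (2*(t^2+2)/(Real.pi*t*(t^2+4))) * (1/(1+x^2))
        - (4/(Real.pi*t*(t^2+4))) * (1/(1+(x-t)^2))) x :=
    (((hl1.sub hl2).div_const _).add (ha1.const_mul _)).sub (ha2.const_mul _)
  convert hG using 1
  unfold H
  have hpi := Real.pi_ne_zero
  have h4 : (t^2+4 : ℝ) ≠ 0 := by positivity
  field_simp
  ring

/-! ### Limits of `G` at `±∞` -/

lemma tendsto_log_ratio (t : ℝ) :
    Tendsto (fun x : ℝ => Real.log (1+x^2) - Real.log (1+(x-t)^2)) atTop (𝓝 0) ∧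
    Tendsto (fun x : ℝ => Real.log (1+x^2) - Real.log (1+(x-t)^2)) atBot (𝓝 0) := by
  have key : ∀ (l : Filter ℝ), Tendsto (fun x : ℝ => x⁻¹) l (𝓝 0) →
      (∀ᶠ x in l, x ≠ 0) →
      Tendsto (fun x : ℝ => Real.log (1+x^2) - Real.log (1+(x-t)^2)) l (𝓝 0) := by
    intro l hl hne
    have hphi : ContinuousAt (fun u : ℝ => (u^2+1)/(u^2+(1-t*u)^2)) 0 := by
      apply ContinuousAt.div (by fun_prop) (by fun_prop)
      norm_num
    have hratio : Tendsto (fun x : ℝ => (1+x^2)/(1+(x-t)^2)) l (𝓝 1) := by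
      have h0 : (fun u : ℝ => (u^2+1)/(u^2+(1-t*u)^2)) 0 = 1 := by norm_num
      have := (hphi.tendsto.comp hl)
      norm_num at this
      refine this.congr' ?_
      filter_upwards [hne] with x hx
      have hx2 : (1:ℝ)+(x-t)^2 ≠ 0 := by positivity
      simp only [Function.comp_apply]
      field_simp
    have := (hratio.log one_ne_zero)
    rw [Real.log_one] at this
    refine this.congr fun x => ?_
    rw [Real.log_div (by positivity) (by positivity)]
  constructor
  · exact key atTop tendsto_inv_atTop_zero (eventually_ne_atTop 0)
  · refine key atBot ?_ (eventually_ne_atBot 0)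
    have h2 : Tendsto (fun x : ℝ => x⁻¹) atTop (𝓝 (0:ℝ)) := tendsto_inv_atTop_zero
    have h3 : Tendsto (fun x : ℝ => -x) atBot atTop := tendsto_neg_atBot_atTop
    have h1 : Tendsto (fun x : ℝ => -(-x)⁻¹) atBot (𝓝 (-(0:ℝ))) := (h2.comp h3).neg
    rw [neg_zero] at h1
    refine h1.congr fun x => by rw [inv_neg, neg_neg]

/-! ### The value of the inner integral -/

lemma integral_H {t : ℝ} (ht : t ≠ 0) : ∫ x, H t x = 2*t/(t^2+4) := by
  have hπ := Real.pi_ne_zero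
  have h4 : (t^2+4 : ℝ) ≠ 0 := by positivity
  set c1 : ℝ := 2*(t^2+2)/(Real.pi*t*(t^2+4)) with hc1
  set c2 : ℝ := 4/(Real.pi*t*(t^2+4)) with hc2
  have htop : Tendsto (G t) atTop (𝓝 (c1 * (Real.pi/2) - c2 * (Real.pi/2))) := by
    have hlog := ((tendsto_log_ratio t).1).div_const (Real.pi*(t^2+4))
    rw [zero_div] at hlog
    have ha1 : Tendsto (fun x : ℝ => c1 * Real.arctan x) atTop (𝓝 (c1 * (Real.pi/2))) :=
      (tendsto_nhds_of_tendsto_nhdsWithin Real.tendsto_arctan_atTop).const_mul c1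
    have hsub : Tendsto (fun x : ℝ => x - t) atTop atTop :=
      tendsto_atTop_add_const_right _ (-t) tendsto_id
    have ha2 : Tendsto (fun x : ℝ => c2 * Real.arctan (x-t)) atTop (𝓝 (c2 * (Real.pi/2))) :=
      ((tendsto_nhds_of_tendsto_nhdsWithin Real.tendsto_arctan_atTop).comp hsub).const_mul c2
    have := (hlog.add ha1).sub ha2
    rw [zero_add] at this
    exact this
  have hbot : Tendsto (G t) atBot (𝓝 (c1 * (-(Real.pi/2)) - c2 * (-(Real.pi/2)))) := by
    have hlog := ((tendsto_log_ratio t).2).div_const (Real.pi*(t^2+4))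
    rw [zero_div] at hlog
    have ha1 : Tendsto (fun x : ℝ => c1 * Real.arctan x) atBot (𝓝 (c1 * (-(Real.pi/2)))) :=
      (tendsto_nhds_of_tendsto_nhdsWithin Real.tendsto_arctan_atBot).const_mul c1
    have hsub : Tendsto (fun x : ℝ => x - t) atBot atBot :=
      tendsto_atBot_add_const_right _ (-t) tendsto_id
    have ha2 : Tendsto (fun x : ℝ => c2 * Real.arctan (x-t)) atBot (𝓝 (c2 * (-(Real.pi/2)))) :=
      ((tendsto_nhds_of_tendsto_nhdsWithin Real.tendsto_arctan_atBot).comp hsub).const_mul c2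
    have := (hlog.add ha1).sub ha2
    rw [zero_add] at this
    exact this
  have := integral_of_hasDerivAt_of_tendsto (hasDerivAt_G ht) (integrable_H t) hbot htop
  rw [this, hc1, hc2]
  field_simp
  ring

/-! ### The key integral over the standard Cauchy distribution -/

lemma pointwise_ftc (b x : ℝ) (hb : 0 ≤ b) :
    (Real.log (1+(x-b)^2) - Real.log (1+x^2)) / (Real.pi*(1+x^2))
      = ∫ t in Set.Ioc 0 b, H t x := by
  have hD : ∀ t : ℝ, HasDerivAt (fun t => Real.log (1+(x-t)^2)) (2*(t-x)/(1+(x-t)^2)) t := by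
    intro t
    have h2 : (0:ℝ) < 1+(x-t)^2 := by positivity
    have hq : HasDerivAt (fun t : ℝ => 1+(x-t)^2) (2*(t-x)) t := by
      have := (((hasDerivAt_id t).const_sub x).pow 2).const_add 1
      convert this using 1
      · rfl
      · rfl
      · funext s; simp
      · simp; ring
    exact hq.log h2.ne'
  have hcont : Continuous (fun t : ℝ => 2*(t-x)/(1+(x-t)^2)) := by
    apply Continuous.div (by continuity) (by continuity)
    intro t; positivity
  have ftc := intervalIntegral.integral_eq_sub_of_hasDerivAt (f := fun t => Real.log (1+(x-t)^2))
    (fun t _ => hD t) (hcont.intervalIntegrable 0 b)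
  have hIoc : ∫ t in Set.Ioc 0 b, H t x = ∫ t in (0:ℝ)..b, H t x := by
    rw [intervalIntegral.integral_of_le hb]
  rw [hIoc]
  symm
  have hHrw : ∀ t : ℝ, H t x = (2*(t-x)/(1+(x-t)^2)) * (Real.pi*(1+x^2))⁻¹ := by
    intro t
    have h2 : (0:ℝ) < 1+(x-t)^2 := by positivity
    have h3 : (0:ℝ) < Real.pi*(1+x^2) := by positivity
    unfold H; field_simp
  calc ∫ t in (0:ℝ)..b, H t x
      = ∫ t in (0:ℝ)..b, (2*(t-x)/(1+(x-t)^2)) * (Real.pi*(1+x^2))⁻¹ := by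
        exact intervalIntegral.integral_congr fun t _ => hHrw t
    _ = (∫ t in (0:ℝ)..b, 2*(t-x)/(1+(x-t)^2)) * (Real.pi*(1+x^2))⁻¹ :=
        intervalIntegral.integral_mul_const _ _
    _ = (Real.log (1+(x-b)^2) - Real.log (1+x^2)) / (Real.pi*(1+x^2)) := by
        rw [ftc]; simp [div_eq_mul_inv]

lemma key_nonneg {b : ℝ} (hb : 0 ≤ b) :
    ∫ x, (Real.log (1+(x-b)^2) - Real.log (1+x^2)) / (Real.pi*(1+x^2))
      = Real.log (1 + b^2/4) := by
  have hswap : ∫ x, ∫ t in Set.Ioc 0 b, H t x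
      = ∫ t in Set.Ioc 0 b, ∫ x, H t x := by
    apply integral_integral_swap (f := fun x t => H t x)
    have hmeas : AEStronglyMeasurable (Function.uncurry fun x t => H t x)
        (volume.prod (volume.restrict (Set.Ioc 0 b))) := by
      exact (continuous_H.comp (continuous_swap)).aestronglyMeasurable
    have h1 : IntegrableOn (fun _ : ℝ => (1:ℝ)) (Set.Ioc 0 b) := by
      refine integrableOn_const ?_
      exact measure_Ioc_lt_top.ne
    have hprod := integrable_inv_pi_one_add_sq.mul_prod h1
    refine hprod.mono' hmeas (Eventually.of_forall fun p => ?_)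
    rw [Real.norm_eq_abs]
    simpa [Function.uncurry] using abs_H_le p.2 p.1
  have lhs_eq : ∫ x, (Real.log (1+(x-b)^2) - Real.log (1+x^2)) / (Real.pi*(1+x^2))
      = ∫ x, ∫ t in Set.Ioc 0 b, H t x :=
    integral_congr_ae (Eventually.of_forall fun x => pointwise_ftc b x hb)
  have inner_eq : ∫ t in Set.Ioc 0 b, ∫ x, H t x = ∫ t in Set.Ioc 0 b, 2*t/(t^2+4) := by
    apply setIntegral_congr_fun measurableSet_Ioc
    intro t ht
    exact integral_H (ne_of_gt ht.1)
  have outer : ∫ t in Set.Ioc 0 b, 2*t/(t^2+4) = Real.log (1 + b^2/4) := by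
    have hD : ∀ t : ℝ, HasDerivAt (fun t => Real.log (t^2+4)) (2*t/(t^2+4)) t := by
      intro t
      have hq : HasDerivAt (fun t : ℝ => t^2+4) (2*t) t := by
        simpa using (hasDerivAt_pow 2 t).add_const 4
      have := hq.log (by positivity : (t^2+4:ℝ) ≠ 0)
      simpa using this
    have hcont : Continuous (fun t : ℝ => 2*t/(t^2+4)) := by
      apply Continuous.div (by continuity) (by continuity)
      intro t; positivity
    have ftc := intervalIntegral.integral_eq_sub_of_hasDerivAt (f := fun t => Real.log (t^2+4))
      (fun t _ => hD t) (hcont.intervalIntegrable 0 b)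
    rw [← intervalIntegral.integral_of_le hb, ftc]
    rw [show (1 + b^2/4 : ℝ) = (b^2+4)/4 by ring,
      Real.log_div (by positivity) (by norm_num)]
    norm_num
  rw [lhs_eq, hswap, inner_eq, outer]

lemma key (b : ℝ) :
    ∫ x, (Real.log (1+(x-b)^2) - Real.log (1+x^2)) / (Real.pi*(1+x^2))
      = Real.log (1 + b^2/4) := by
  rcases le_or_gt 0 b with hb | hb
  · exact key_nonneg hb
  · have h := key_nonneg (b := -b) (by linarith)
    rw [show ((-b):ℝ)^2 = b^2 by ring] at h
    rw [← h, ← integral_neg_eq_self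
      (fun x => (Real.log (1+(x-b)^2) - Real.log (1+x^2)) / (Real.pi*(1+x^2)))]
    apply integral_congr_ae (Eventually.of_forall fun x => ?_)
    have : (-x-b)^2 = (x-(-b))^2 := by ring
    rw [this]
    norm_num

/-! ### Reduction of `klDiv` to a real integral -/

noncomputable def d (θ σ x : ℝ) : ℝ := 1 / (Real.pi * σ * (1 + ((x - θ) / σ) ^ 2))

variable {θ θ' σ : ℝ}

lemma d_pos (hσ : 0 < σ) (x : ℝ) : 0 < d θ σ x := by
  unfold d
  have := Real.pi_pos
  positivity

lemma continuous_d (hσ : 0 < σ) : Continuous (d θ σ) := by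
  apply Continuous.div continuous_const (by continuity)
  intro x
  have h := d_pos (θ := θ) hσ x
  have := Real.pi_pos
  positivity

lemma cauchy_eq (hσ : 0 < σ) :
    cauchyMeasure θ σ = (cauchyMeasure θ' σ).withDensity
      (fun x => ENNReal.ofReal (d θ σ x) / ENNReal.ofReal (d θ' σ x)) := by
  have hm1 : Measurable (fun x => ENNReal.ofReal (d θ' σ x)) :=
    (continuous_d hσ).measurable.ennreal_ofReal
  have hm2 : Measurable (fun x => ENNReal.ofReal (d θ σ x) / ENNReal.ofReal (d θ' σ x)) :=
    ((continuous_d hσ).measurable.ennreal_ofReal).div ((continuous_d hσ).measurable.ennreal_ofReal)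
  have hde : ∀ θ₀ : ℝ, cauchyMeasure θ₀ σ
      = volume.withDensity (fun x => ENNReal.ofReal (d θ₀ σ x)) := fun _ => rfl
  rw [hde θ, hde θ', ← withDensity_mul _ hm1 hm2]
  congr 1
  funext x
  show ENNReal.ofReal (d θ σ x)
    = ENNReal.ofReal (d θ' σ x) * (ENNReal.ofReal (d θ σ x) / ENNReal.ofReal (d θ' σ x))
  rw [ENNReal.mul_div_cancel]
  · exact (ENNReal.ofReal_pos.2 (d_pos hσ x)).ne'
  · exact ENNReal.ofReal_ne_top

lemma kl_ac (hσ : 0 < σ) : cauchyMeasure θ σ ≪ cauchyMeasure θ' σ := by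
  rw [cauchy_eq hσ]
  exact withDensity_absolutelyContinuous _ _

lemma real_integral_eq (hσ : 0 < σ) :
    ∫ x, Real.log ((cauchyMeasure θ σ).rnDeriv (cauchyMeasure θ' σ) x).toReal
        ∂(cauchyMeasure θ σ)
      = ∫ x, d θ σ x * Real.log (d θ σ x / d θ' σ x) := by
  have hsf : SigmaFinite (cauchyMeasure θ' σ) := by
    unfold _root_.cauchyMeasure; infer_instance
  have hmeas : Measurable (fun x => ENNReal.ofReal (d θ σ x) / ENNReal.ofReal (d θ' σ x)) :=
    ((continuous_d hσ).measurable.ennreal_ofReal).div ((continuous_d hσ).measurable.ennreal_ofReal)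
  have hac : cauchyMeasure θ σ ≪ cauchyMeasure θ' σ := kl_ac hσ
  have hrn : (cauchyMeasure θ σ).rnDeriv (cauchyMeasure θ' σ)
      =ᵐ[cauchyMeasure θ' σ] fun x => ENNReal.ofReal (d θ σ x) / ENNReal.ofReal (d θ' σ x) := by
    conv_lhs => rw [cauchy_eq (θ := θ) (θ' := θ') hσ]
    exact Measure.rnDeriv_withDensity _ hmeas
  have hrnP : (cauchyMeasure θ σ).rnDeriv (cauchyMeasure θ' σ)
      =ᵐ[cauchyMeasure θ σ] fun x => ENNReal.ofReal (d θ σ x) / ENNReal.ofReal (d θ' σ x) :=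
    hac.ae_eq hrn
  rw [integral_congr_ae (hrnP.mono fun x hx => by rw [hx])]
  have htoReal : ∀ x, ((ENNReal.ofReal (d θ σ x) / ENNReal.ofReal (d θ' σ x)).toReal)
      = d θ σ x / d θ' σ x := by
    intro x
    rw [ENNReal.toReal_div, ENNReal.toReal_ofReal (d_pos hσ x).le,
      ENNReal.toReal_ofReal (d_pos hσ x).le]
  simp only [htoReal]
  rw [_root_.cauchyMeasure]
  have : (fun x : ℝ => ENNReal.ofReal (1 / (Real.pi * σ * (1 + ((x - θ) / σ) ^ 2))))
      = fun x => ((d θ σ x).toNNReal : ℝ≥0∞) := by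
    funext x; rfl
  rw [this, integral_withDensity_eq_integral_smul
    ((continuous_d (θ := θ) hσ).measurable.real_toNNReal)]
  congr 1
  funext x
  rw [NNReal.smul_def, Real.coe_toNNReal _ (d_pos hσ x).le, smul_eq_mul]

/-! ### Substitution to the standard Cauchy distribution -/

lemma pointwise_subst (hσ : 0 < σ) (x : ℝ) :
    d θ σ x * Real.log (d θ σ x / d θ' σ x)
      = σ⁻¹ * (((fun u => (Real.log (1+(u-(-(θ-θ')/σ))^2) - Real.log (1+u^2))
          / (Real.pi*(1+u^2))) ((x-θ)/σ))) := by
  have hπ := Real.pi_pos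
  have h1 : (0:ℝ) < 1+((x-θ)/σ)^2 := by positivity
  have h2 : (0:ℝ) < 1+((x-θ')/σ)^2 := by positivity
  have hratio : d θ σ x / d θ' σ x = (1+((x-θ')/σ)^2)/(1+((x-θ)/σ)^2) := by
    unfold d
    field_simp
  have harg : (x-θ)/σ - (-(θ-θ')/σ) = (x-θ')/σ := by
    field_simp
    ring
  simp only
  rw [hratio, Real.log_div h2.ne' h1.ne', harg]
  unfold d
  field_simp

lemma integral_subst (hσ : 0 < σ) :
    ∫ x, d θ σ x * Real.log (d θ σ x / d θ' σ x)
      = Real.log (1 + (θ-θ')^2/(4*σ^2)) := by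
  set b : ℝ := -(θ-θ')/σ with hb
  set h : ℝ → ℝ := fun u => (Real.log (1+(u-b)^2) - Real.log (1+u^2)) / (Real.pi*(1+u^2))
    with hh
  calc ∫ x, d θ σ x * Real.log (d θ σ x / d θ' σ x)
      = ∫ x, σ⁻¹ * h ((x-θ)/σ) := by
        exact integral_congr_ae (Filter.Eventually.of_forall fun x => pointwise_subst hσ x)
    _ = σ⁻¹ * ∫ x, h ((x-θ)/σ) := integral_const_mul _ _
    _ = σ⁻¹ * ∫ x, (fun y => h (y/σ)) (x + (-θ)) := by
        simp only [← sub_eq_add_neg]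
    _ = σ⁻¹ * ∫ x, h (x/σ) := by rw [integral_add_right_eq_self (fun y => h (y/σ)) (-θ)]
    _ = σ⁻¹ * (|σ| • ∫ u, h u) := by rw [Measure.integral_comp_div h σ]
    _ = ∫ u, h u := by
        rw [abs_of_pos hσ, smul_eq_mul, ← mul_assoc, inv_mul_cancel₀ hσ.ne', one_mul]
    _ = Real.log (1 + b^2/4) := key b
    _ = Real.log (1 + (θ-θ')^2/(4*σ^2)) := by
        congr 1
        rw [hb]
        field_simp

end KLCauchyAux

/-- KL divergence between Cauchy distributions with common scale `σ`:
`KL(P_θ ‖ P_θ') = log(1 + (θ − θ')²/(4σ²)) ≤ (θ − θ')²/(4σ²)`. -/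
theorem klDiv_cauchy (θ θ' σ : ℝ) (hσ : 0 < σ) :
    klDiv (cauchyMeasure θ σ) (cauchyMeasure θ' σ) =
      ENNReal.ofReal (Real.log (1 + (θ - θ') ^ 2 / (4 * σ ^ 2))) ∧
    klDiv (cauchyMeasure θ σ) (cauchyMeasure θ' σ) ≤
      ENNReal.ofReal ((θ - θ') ^ 2 / (4 * σ ^ 2)) := by
  have hac := KLCauchyAux.kl_ac (θ := θ) (θ' := θ') hσ
  have heq : klDiv (cauchyMeasure θ σ) (cauchyMeasure θ' σ) =
      ENNReal.ofReal (Real.log (1 + (θ - θ') ^ 2 / (4 * σ ^ 2))) := by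
    rw [klDiv, if_pos hac, KLCauchyAux.real_integral_eq hσ, KLCauchyAux.integral_subst hσ]
  refine ⟨heq, ?_⟩
  rw [heq]
  apply ENNReal.ofReal_le_ofReal
  have hs : (0:ℝ) ≤ (θ - θ') ^ 2 / (4 * σ ^ 2) := by positivity
  have := Real.log_le_sub_one_of_pos (by linarith : (0:ℝ) < 1 + (θ - θ') ^ 2 / (4 * σ ^ 2))
  linarith
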